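/- Let K be a field such that K[√-1] is not algebraically closed. Then there exist a finite separable field extension L/K and a prime number p such that L admits a normal field extension of degree p. -/

import Mathlib

open IntermediateField Module Polynomial

private lemma auxQ {G : Type*} [Group G] [Finite G] {p k : ℕ} (hp : p.Prime)
    (hG : Nat.card G = p ^ (k + 1)) : ∃ Q : Subgroup G, Q.Normal ∧ Q.index = p := by
  haveI := Fact.mk hp
  obtain ⟨Q, hQ⟩ := Sylow.exists_subgroup_card_pow_prime p (n := k)
    (hG ▸ pow_dvd_pow p k.le_succ)
  have hcard := Subgroup.card_mul_index Q
  rw [hQ, hG, pow_succ] at hcard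
  have hpk : 0 < p ^ k := pow_pos hp.pos k
  have hidx : Q.index = p := Nat.eq_of_mul_eq_mul_left hpk hcard
  refine ⟨Q, ?_, hidx⟩
  have hnil : Group.IsNilpotent G := (IsPGroup.of_card hG).isNilpotent
  have hnc := normalizerCondition_of_isNilpotent (G := G)
  by_cases htop : Q = ⊤
  · exfalso
    rw [htop, Subgroup.index_top] at hidx
    exact hp.one_lt.ne' hidx.symm
  · have hlt : Q < Subgroup.normalizer (Q : Set G) := hnc Q (lt_top_iff_ne_top.mpr htop)
    have hrel := Subgroup.relIndex_mul_index (Subgroup.le_normalizer (H := Q))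
    rw [hidx] at hrel
    have hdvd : (Subgroup.normalizer (Q : Set G)).index ∣ p := Dvd.intro_left _ hrel
    rcases (Nat.dvd_prime hp).mp hdvd with h1 | hP
    · exact Subgroup.normalizer_eq_top_iff.mp (Subgroup.index_eq_one.mp h1)
    · exfalso
      rw [hP] at hrel
      have h1 : Q.relIndex (Subgroup.normalizer (Q : Set G)) = 1 :=
        Nat.eq_of_mul_eq_mul_right hp.pos (by simpa using hrel)
      exact hlt.ne (le_antisymm Subgroup.le_normalizer (Subgroup.relIndex_eq_one.mp h1))

private lemma auxGal (L E : Type*) [Field L] [Field E] [Algebra L E] [IsGalois L E]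
    [FiniteDimensional L E] {p k : ℕ} (hp : p.Prime)
    (hk : Module.finrank L E = p ^ (k + 1)) :
    ∃ M : IntermediateField L E, Normal L M ∧ Module.finrank L M = p := by
  classical
  have hcardG : Nat.card (E ≃ₐ[L] E) = p ^ (k + 1) := by
    rw [IsGalois.card_aut_eq_finrank, hk]
  obtain ⟨Q, hQn, hQi⟩ := auxQ hp hcardG
  haveI := hQn
  refine ⟨IntermediateField.fixedField Q, (IsGalois.of_fixedField_normal_subgroup Q).to_normal, ?_⟩
  have h1 : finrank (IntermediateField.fixedField Q) E = Nat.card Q := by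
    exact IntermediateField.finrank_fixedField_eq_card Q
  have h2 := Subgroup.card_mul_index Q
  rw [hQi, hcardG] at h2
  have h3 : finrank L (IntermediateField.fixedField Q) *
      finrank (IntermediateField.fixedField Q) E = finrank L E :=
    finrank_mul_finrank L (IntermediateField.fixedField Q) E
  rw [h1, hk] at h3
  have hQcard : Nat.card Q = p ^ k := by
    have hppos : 0 < p := hp.pos
    have : Nat.card Q * p = p ^ k * p := by rw [h2, pow_succ]
    exact Nat.eq_of_mul_eq_mul_right hppos this
  rw [hQcard] at h3
  have hpk : 0 < p ^ k := pow_pos hp.pos k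
  have : finrank L (IntermediateField.fixedField Q) * p ^ k = p * p ^ k := by
    rw [h3, pow_succ, mul_comm (p ^ k) p]
  exact Nat.eq_of_mul_eq_mul_right hpk this

set_option maxHeartbeats 1000000 in
set_option synthInstance.maxHeartbeats 200000 in
private lemma auxSep (K : Type*) [Field K] [Algebra.IsSeparable K (AlgebraicClosure K)]
    (x : AlgebraicClosure K) (hx : x ∉ (⊥ : IntermediateField K (AlgebraicClosure K))) :
    ∃ p : ℕ, p.Prime ∧
      ∃ L : IntermediateField K (AlgebraicClosure K),
        FiniteDimensional K L ∧ Algebra.IsSeparable K L ∧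
        ∃ M : IntermediateField L (AlgebraicClosure K),
          Normal (↥L) (↥M) ∧ Module.finrank (↥L) (↥M) = p := by
  classical
  have hxint : IsIntegral K x := Algebra.IsIntegral.isIntegral x
  haveI : FiniteDimensional K ↥(adjoin K {x}) := adjoin.finiteDimensional hxint
  set E₁ : IntermediateField K (AlgebraicClosure K) :=
    normalClosure K (↥(adjoin K {x})) (AlgebraicClosure K) with hE₁
  haveI : FiniteDimensional K ↥E₁ := by infer_instance
  haveI : Normal K ↥E₁ := by infer_instance
  haveI : Algebra.IsSeparable K ↥E₁ :=
    Algebra.isSeparable_tower_bot_of_isSeparable K ↥E₁ (AlgebraicClosure K)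
  haveI : IsGalois K ↥E₁ := ⟨⟩
  have hxE : x ∈ E₁ := (adjoin K {x}).le_normalClosure (mem_adjoin_simple_self K x)
  have hn0 : 0 < finrank K ↥E₁ := finrank_pos
  have hn1 : finrank K ↥E₁ ≠ 1 := by
    intro h
    rw [IntermediateField.finrank_eq_one_iff] at h
    exact hx (h ▸ hxE)
  set p := (finrank K ↥E₁).minFac with hpdef
  have hp : p.Prime := Nat.minFac_prime hn1
  haveI := Fact.mk hp
  have hcardG : Nat.card (↥E₁ ≃ₐ[K] ↥E₁) = finrank K ↥E₁ := by
    exact IsGalois.card_aut_eq_finrank K ↥E₁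
  obtain ⟨P⟩ : Nonempty (Sylow p (↥E₁ ≃ₐ[K] ↥E₁)) := Sylow.nonempty
  set k := (finrank K ↥E₁).factorization p with hk
  have hk0 : 0 < k := hp.factorization_pos_of_dvd hn0.ne' (Nat.minFac_dvd _)
  have hcardP : Nat.card (↑P : Subgroup (↥E₁ ≃ₐ[K] ↥E₁)) = p ^ k := by
    rw [show ((↑P : Subgroup (↥E₁ ≃ₐ[K] ↥E₁)) : Type _) = P from rfl,
      P.card_eq_multiplicity, hcardG]
  set L₀ : IntermediateField K ↥E₁ := IntermediateField.fixedField ↑P with hL₀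
  have hfixP : finrank ↥L₀ ↥E₁ = p ^ k := by
    rw [hL₀, IntermediateField.finrank_fixedField_eq_card, hcardP]
  have hL0n : finrank K ↥L₀ * p ^ k = finrank K ↥E₁ := by
    rw [← hfixP]; exact finrank_mul_finrank K ↥L₀ ↥E₁
  set L : IntermediateField K (AlgebraicClosure K) := L₀.map E₁.val with hLdef
  have e0 : ↥L₀ ≃ₐ[K] ↥L := IntermediateField.equivMap L₀ E₁.val
  haveI : FiniteDimensional K ↥L := LinearEquiv.finiteDimensional e0.toLinearEquiv
  haveI : Algebra.IsSeparable K ↥L :=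
    Algebra.isSeparable_tower_bot_of_isSeparable K ↥L (AlgebraicClosure K)
  have hLrank : finrank K ↥L = finrank K ↥L₀ := e0.toLinearEquiv.finrank_eq.symm
  have hLE : L ≤ E₁ := by
    rintro _ ⟨y, -, rfl⟩
    exact y.2
  set E' : IntermediateField ↥L (AlgebraicClosure K) := extendScalars hLE with hE'
  haveI hE'K : FiniteDimensional K ↥E' := inferInstanceAs (FiniteDimensional K ↥E₁)
  haveI : Normal K ↥E' := inferInstanceAs (Normal K ↥E₁)
  haveI : Algebra.IsSeparable K ↥E' := inferInstanceAs (Algebra.IsSeparable K ↥E₁)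
  haveI : FiniteDimensional ↥L ↥E' := FiniteDimensional.right K ↥L ↥E'
  haveI : Normal ↥L ↥E' := Normal.tower_top_of_normal K ↥L ↥E'
  haveI : Algebra.IsSeparable ↥L ↥E' := Algebra.isSeparable_tower_top_of_isSeparable K ↥L ↥E'
  haveI : IsGalois ↥L ↥E' := ⟨⟩
  have hE'n : finrank K ↥E' = finrank K ↥E₁ := rfl
  have h4 : finrank K ↥L * finrank ↥L ↥E' = finrank K ↥E₁ := by
    rw [← hE'n]; exact finrank_mul_finrank K ↥L ↥E'
  have hE'rank : finrank ↥L ↥E' = p ^ k := by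
    have hpos : 0 < finrank K ↥L := finrank_pos
    apply Nat.eq_of_mul_eq_mul_left hpos
    rw [h4, hLrank, hL0n]
  obtain ⟨M₀, hM₀n, hM₀r⟩ := auxGal ↥L ↥E' (k := k - 1) hp
    (by rw [hE'rank, Nat.sub_add_cancel hk0])
  have e1 : ↥M₀ ≃ₐ[↥L] ↥(M₀.map E'.val) := IntermediateField.equivMap M₀ E'.val
  refine ⟨p, hp, L, inferInstance, inferInstance, M₀.map E'.val, ?_, ?_⟩
  · haveI := hM₀n
    exact Normal.of_algEquiv e1
  · rw [← e1.toLinearEquiv.finrank_eq]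
    exact hM₀r


private lemma auxInsep (K : Type*) [Field K] (hperf : ¬PerfectField K) :
    ∃ p : ℕ, p.Prime ∧
      ∃ L : IntermediateField K (AlgebraicClosure K),
        FiniteDimensional K L ∧ Algebra.IsSeparable K L ∧
        ∃ M : IntermediateField L (AlgebraicClosure K),
          Normal (↥L) (↥M) ∧ Module.finrank (↥L) (↥M) = p := by
  classical
  obtain ⟨q, hq⟩ := CharP.exists K
  rcases CharP.char_is_prime_or_zero K q with hqp | rfl
  swap
  · exact absurd (haveI : CharZero K := CharP.charP_to_charZero K; PerfectField.ofCharZero) hperf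
  haveI := Fact.mk hqp
  haveI : ExpChar K q := ExpChar.prime hqp
  -- K is not perfect, so Frobenius is not surjective
  have hfrob : ¬Function.Surjective (frobenius K q) := by
    intro hsurj
    haveI := PerfectRing.ofSurjective K q hsurj
    exact hperf (PerfectRing.toPerfectField K q)
  obtain ⟨a, ha⟩ := not_forall.mp hfrob
  have ha' : ∀ b : K, b ^ q ≠ a := by
    intro b hb
    exact ha ⟨b, by rw [frobenius_def]; exact hb⟩
  -- take a q-th root y of a in the algebraic closure
  obtain ⟨y, hy⟩ := IsAlgClosed.exists_pow_nat_eq (k := AlgebraicClosure K)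
    (algebraMap K _ a) (hn := hqp.pos)
  refine ⟨q, hqp, ⊥, inferInstance, ?_, ?_⟩
  · -- bottom field is separable over K
    refine ⟨fun z => ?_⟩
    obtain ⟨c, hc⟩ := IntermediateField.mem_bot.mp z.2
    have : (z : AlgebraicClosure K) = algebraMap K _ c := hc.symm
    have hz : minpoly K z = X - C c := by
      rw [IntermediateField.minpoly_eq, this, minpoly.eq_X_sub_C]
    rw [IsSeparable, hz]
    exact separable_X_sub_C
  · -- the extension ⊥⟮y⟯ / ⊥ is normal of degree q
    set L : IntermediateField K (AlgebraicClosure K) := ⊥ with hL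
    haveI : ExpChar ↥L q := expChar_of_injective_algebraMap (algebraMap K ↥L).injective q
    set a' : ↥L := algebraMap K ↥L a with ha'def
    have haval : algebraMap ↥L (AlgebraicClosure K) a' = algebraMap K _ a := by
      rw [ha'def, ← IsScalarTower.algebraMap_apply]
    have hya : y ^ q = algebraMap ↥L (AlgebraicClosure K) a' := by rw [haval, hy]
    have ha'' : ∀ b : ↥L, b ^ q ≠ a' := by
      intro b hb
      obtain ⟨c, hc⟩ := IntermediateField.mem_bot.mp b.2
      apply ha' c
      have h2 : (algebraMap ↥L (AlgebraicClosure K)) b ^ q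
          = algebraMap ↥L (AlgebraicClosure K) a' := by
        rw [← map_pow, hb]
      apply (algebraMap K (AlgebraicClosure K)).injective
      rw [map_pow, hc, ← haval]
      exact h2
    have hirr : Irreducible (X ^ q - C a' : Polynomial ↥L) :=
      X_pow_sub_C_irreducible_of_prime hqp ha''
    have hmonic : (X ^ q - C a' : Polynomial ↥L).Monic := monic_X_pow_sub_C _ hqp.ne_zero
    have hroot : Polynomial.aeval y (X ^ q - C a' : Polynomial ↥L) = 0 := by
      rw [map_sub, map_pow, aeval_X, aeval_C, hya, sub_self]
    have hminpoly : minpoly ↥L y = X ^ q - C a' :=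
      (minpoly.eq_of_irreducible_of_monic hirr hroot hmonic).symm
    have hyint : IsIntegral ↥L y := ⟨X ^ q - C a', hmonic, by
      simpa [Polynomial.eval₂_sub, Polynomial.eval₂_pow] using hroot⟩
    refine ⟨adjoin ↥L {y}, ?_, ?_⟩
    · haveI : IsPurelyInseparable ↥L (adjoin ↥L {y}) := by
        rw [show adjoin ↥L {y} = (↥L)⟮y⟯ from rfl,
          IntermediateField.isPurelyInseparable_adjoin_simple_iff_pow_mem ↥L _ q]
        exact ⟨1, by rw [pow_one, hya]; exact ⟨a', rfl⟩⟩
      infer_instance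
    · rw [show adjoin ↥L {y} = (↥L)⟮y⟯ from rfl, IntermediateField.adjoin.finrank hyint,
        hminpoly, natDegree_X_pow_sub_C]

/-- If K(√-1) is not algebraically closed (working inside an algebraic closure Ω of K:
the intermediate field K(i) with i² = -1 is not all of Ω), then there exist a finite
separable extension L/K and a prime p such that L admits a normal extension of
degree p. -/
theorem stmt_2 (K : Type*) [Field K] (i : AlgebraicClosure K) (hi : i ^ 2 = -1)
    (hne : IntermediateField.adjoin K ({i} : Set (AlgebraicClosure K)) ≠ ⊤) :
    ∃ p : ℕ, p.Prime ∧
      ∃ L : IntermediateField K (AlgebraicClosure K),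
        FiniteDimensional K L ∧ Algebra.IsSeparable K L ∧
        ∃ M : IntermediateField L (AlgebraicClosure K),
          Normal (↥L) (↥M) ∧ Module.finrank (↥L) (↥M) = p := by
  by_cases hperf : PerfectField K
  · haveI : Algebra.IsSeparable K (AlgebraicClosure K) :=
      Algebra.IsAlgebraic.isSeparable_of_perfectField
    obtain ⟨x, hx⟩ : ∃ x, x ∉ IntermediateField.adjoin K ({i} : Set (AlgebraicClosure K)) := by
      by_contra h
      push_neg at h
      exact hne (IntermediateField.ext fun y =>
        ⟨fun _ => IntermediateField.mem_top, fun _ => h y⟩)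
    refine auxSep K x fun hb => hx ?_
    obtain ⟨c, hc⟩ := IntermediateField.mem_bot.mp hb
    exact hc ▸ (IntermediateField.adjoin K ({i} : Set (AlgebraicClosure K))).algebraMap_mem c
  · exact auxInsep K hperf
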